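/- Let n ≥ 1 and let E be a subgroup of GL_3(ℤ/2^nℤ) of order 7. Then the quotient N_{GL_3(ℤ/2^nℤ)}(E)/E of the normalizer of E by E has order 3·2^a for some integer a ≥ 0; that is, it is a {2,3}-group whose Sylow 3-subgroups have order exactly 3. -/

import Mathlib

private theorem aux_unit (n : ℕ) (hn : 1 ≤ n) (x : ZMod (2^n))
    (h : IsUnit (ZMod.castHom (pow_dvd_pow 2 hn : (2:ℕ)^1 ∣ 2^n) (ZMod 2) x)) : IsUnit x := by
  haveI : NeZero (2^n) := ⟨pow_ne_zero n two_ne_zero⟩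
  have hx : ((x.val : ZMod (2^n))) = x := ZMod.natCast_rightInverse x
  have hcast : (ZMod.castHom (pow_dvd_pow 2 hn : (2:ℕ)^1 ∣ 2^n) (ZMod 2)) x = ((x.val : ZMod 2)) := by
    rw [← hx]; simp
  rw [hcast] at h
  rw [← hx]
  rw [ZMod.isUnit_iff_coprime] at h ⊢
  exact Nat.Coprime.pow_right _ h

private theorem aux_two_dvd (n : ℕ) (hn : 1 ≤ n) (x : ZMod (2^n))
    (h : (ZMod.castHom (pow_dvd_pow 2 hn : (2:ℕ)^1 ∣ 2^n) (ZMod 2) x) = 0) : ∃ y, x = 2 * y := by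
  haveI : NeZero (2^n) := ⟨pow_ne_zero n two_ne_zero⟩
  have hx : ((x.val : ZMod (2^n))) = x := ZMod.natCast_rightInverse x
  have hcast : (ZMod.castHom (pow_dvd_pow 2 hn : (2:ℕ)^1 ∣ 2^n) (ZMod 2)) x = ((x.val : ZMod 2)) := by
    rw [← hx]; simp
  rw [hcast] at h
  rw [ZMod.natCast_eq_zero_iff] at h
  obtain ⟨y, hy⟩ := h
  exact ⟨(y : ZMod (2^n)), by rw [← hx, hy]; push_cast; ring⟩

private theorem aux_sq {R : Type*} [Ring R] (l : ℕ) (B : R) :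
    ∃ C, (1 + 2^(l+1) • B)^2 = 1 + 2^(l+2) • C := by
  refine ⟨B + 2^l • (B*B), ?_⟩
  have h1 : (1 + 2^(l+1) • B)^2 = 1 + 2^(l+1) • B + 2^(l+1) • B + (2^(l+1) • B) * (2^(l+1) • B) := by
    rw [pow_two, add_mul, mul_add, mul_add]
    simp only [one_mul, mul_one]
    abel
  rw [h1, smul_mul_smul_comm]
  rw [smul_add, smul_smul]
  have h2 : (2:ℕ)^(l+2) * 2^l = 2^(l+1) * 2^(l+1) := by ring
  rw [h2]
  have h3 : (2:ℕ)^(l+2) • B = 2^(l+1) • B + 2^(l+1) • B := by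
    rw [← add_smul]; congr 1; ring
  rw [h3]
  abel

private theorem aux_pow {R : Type*} [Ring R] (A : R) (k : ℕ) :
    ∃ C, (1 + 2 • A)^(2^k) = 1 + 2^(k+1) • C := by
  induction k with
  | zero => exact ⟨A, by norm_num⟩
  | succ k ih =>
      obtain ⟨C, hC⟩ := ih
      obtain ⟨D, hD⟩ := aux_sq k C
      exact ⟨D, by rw [pow_succ, pow_mul, hC, hD]⟩

private theorem pow2mod7 (i : ℕ) : 2^i % 7 = 1 ∨ 2^i % 7 = 2 ∨ 2^i % 7 = 4 := by
  induction i with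
  | zero => left; rfl
  | succ k ih =>
      rw [pow_succ, Nat.mul_mod]
      rcases ih with h|h|h <;> rw [h] <;> norm_num

private theorem aux_arith (K n7 q : ℕ) (h : n7 * q = 2^K * 3) (h7 : n7 % 7 = 1) :
    ∃ a, q = 3 * 2^a := by
  by_cases h3 : 3 ∣ n7
  · obtain ⟨s, rfl⟩ := h3
    have hs : (s * q) * 3 = 2^K * 3 := by rw [← h]; ring
    have hs' : s * q = 2^K := Nat.eq_of_mul_eq_mul_right (by norm_num) hs
    have hsdvd : s ∣ 2^K := ⟨q, hs'.symm⟩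
    obtain ⟨i, _, rfl⟩ := (Nat.dvd_prime_pow Nat.prime_two).mp hsdvd
    exfalso
    rcases pow2mod7 i with hmod|hmod|hmod <;>
      rw [Nat.mul_mod, hmod] at h7 <;> norm_num at h7
  · have h3q : 3 ∣ q := by
      have hdvd : 3 ∣ n7 * q := ⟨2^K, by rw [h]; ring⟩
      rcases (Nat.Prime.dvd_mul Nat.prime_three).mp hdvd with h'|h'
      · exact absurd h' h3
      · exact h'
    obtain ⟨m, rfl⟩ := h3q
    have hm : (n7 * m) * 3 = 2^K * 3 := by rw [← h]; ring
    have hm' : n7 * m = 2^K := Nat.eq_of_mul_eq_mul_right (by norm_num) hm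
    have : m ∣ 2^K := ⟨n7, by rw [← hm']; ring⟩
    obtain ⟨a, _, rfl⟩ := (Nat.dvd_prime_pow Nat.prime_two).mp this
    exact ⟨a, rfl⟩

/-- Let `n ≥ 1` and `E` a subgroup of `GL_3(ℤ/2^nℤ)` of order `7`. Then
`N_{GL_3(ℤ/2^nℤ)}(E)/E` has order `3·2^a` for some `a ≥ 0`. -/
theorem stmt16 (n : ℕ) (hn : 1 ≤ n) (E : Subgroup (GL (Fin 3) (ZMod (2 ^ n))))
    (hE : Nat.card E = 7) :
    ∃ a : ℕ, Nat.card (Subgroup.normalizer (E : Set (GL (Fin 3) (ZMod (2 ^ n)))) ⧸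
      E.subgroupOf (Subgroup.normalizer (E : Set (GL (Fin 3) (ZMod (2 ^ n)))))) = 3 * 2 ^ a := by
  haveI : NeZero (2^n) := ⟨pow_ne_zero n two_ne_zero⟩
  set G := GL (Fin 3) (ZMod (2^n)) with hGdef
  set f : ZMod (2^n) →+* ZMod 2 := ZMod.castHom (pow_dvd_pow 2 hn : (2:ℕ)^1 ∣ 2^n) (ZMod 2) with hf
  set φ : G →* GL (Fin 3) (ZMod 2) := Matrix.GeneralLinearGroup.map f with hφ
  -- surjectivity
  have hsurj : Function.Surjective φ := by
    intro g
    set M : Matrix (Fin 3) (Fin 3) (ZMod (2^n)) :=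
      fun i j => (((g : Matrix (Fin 3) (Fin 3) (ZMod 2)) i j).val : ZMod (2^n)) with hM
    have hMmap : M.map f = (g : Matrix (Fin 3) (Fin 3) (ZMod 2)) := by
      ext i j
      show f ((((g : Matrix (Fin 3) (Fin 3) (ZMod 2)) i j).val : ZMod (2^n))) = _
      rw [map_natCast, ZMod.natCast_zmod_val]
    have hdet : IsUnit M.det := by
      apply aux_unit n hn
      rw [← hf, RingHom.map_det, RingHom.mapMatrix_apply, hMmap]
      exact Matrix.isUnits_det_units g
    obtain ⟨u, hu2⟩ := (Matrix.isUnit_iff_isUnit_det M).mpr hdet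
    refine ⟨u, ?_⟩
    ext1
    show (u : Matrix (Fin 3) (Fin 3) (ZMod (2^n))).map f = (g : Matrix (Fin 3) (Fin 3) (ZMod 2))
    rw [hu2, hMmap]
  -- every element of the kernel has 2-power order
  have hker2 : ∀ g : G, g ∈ φ.ker → g ^ (2^(n-1)) = 1 := by
    intro g hg
    rw [MonoidHom.mem_ker] at hg
    have hg' : ((g : Matrix (Fin 3) (Fin 3) (ZMod (2^n)))).map f = 1 :=
      congrArg Units.val hg
    have hentry : ∀ i j, f (((g : Matrix (Fin 3) (Fin 3) (ZMod (2^n))) - 1) i j) = 0 := by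
      intro i j
      have h1 : f ((g : Matrix (Fin 3) (Fin 3) (ZMod (2^n))) i j)
          = (1 : Matrix (Fin 3) (Fin 3) (ZMod 2)) i j := by
        have := congrArg (fun M => M i j) hg'
        simpa [Matrix.map_apply] using this
      have h2 : f ((1 : Matrix (Fin 3) (Fin 3) (ZMod (2^n))) i j)
          = (1 : Matrix (Fin 3) (Fin 3) (ZMod 2)) i j := by
        have : (1 : Matrix (Fin 3) (Fin 3) (ZMod (2^n))).map f = 1 :=
          Matrix.map_one f f.map_zero f.map_one
        have := congrArg (fun M => M i j) this
        simpa [Matrix.map_apply] using this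
      simp [Matrix.sub_apply, map_sub, h1, h2]
    have hA : ∀ i j, ∃ y, ((g : Matrix (Fin 3) (Fin 3) (ZMod (2^n))) - 1) i j = 2 * y :=
      fun i j => aux_two_dvd n hn _ (hentry i j)
    choose A hAspec using fun i => hA i
    have hgA : (g : Matrix (Fin 3) (Fin 3) (ZMod (2^n))) = 1 + 2 • (Matrix.of A) := by
      ext i j
      have := hAspec i j
      simp only [Matrix.sub_apply] at this
      simp only [Matrix.add_apply, Matrix.smul_apply, Matrix.of_apply]
      rw [nsmul_eq_mul]
      push_cast
      linear_combination this
    obtain ⟨C, hC⟩ := aux_pow (Matrix.of A) (n-1)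
    have hn1 : n - 1 + 1 = n := by omega
    have hCzero : (2^n : ℕ) • C = 0 := by
      ext i j
      simp only [Matrix.smul_apply, Matrix.zero_apply, nsmul_eq_mul]
      rw [ZMod.natCast_self, zero_mul]
    apply Units.ext
    rw [Units.val_pow_eq_pow_val, hgA, hC, hn1, hCzero, add_zero, Units.val_one]
  -- the kernel has 2-power cardinality
  have hkercard : ∃ k, Nat.card φ.ker = 2^k := by
    have hpos : Nat.card φ.ker ≠ 0 := Nat.card_pos.ne'
    refine ⟨(Nat.card φ.ker).primeFactorsList.length,
      Nat.eq_prime_pow_of_unique_prime_dvd hpos ?_⟩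
    intro d hd hdvd
    haveI : Fact d.Prime := ⟨hd⟩
    haveI : Fintype φ.ker := Fintype.ofFinite _
    rw [Nat.card_eq_fintype_card] at hdvd
    obtain ⟨x, hx⟩ := exists_prime_orderOf_dvd_card d hdvd
    have hx1 : x ^ (2^(n-1)) = 1 := by
      have h := hker2 (x : G) x.2
      apply Subtype.ext
      rw [SubmonoidClass.coe_pow, OneMemClass.coe_one]
      exact h
    have : d ∣ 2^(n-1) := hx ▸ orderOf_dvd_of_pow_eq_one hx1
    have := hd.dvd_of_dvd_pow this
    exact (Nat.prime_dvd_prime_iff_eq hd Nat.prime_two).mp this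
  obtain ⟨k, hk⟩ := hkercard
  -- card of G
  have hcard168 : Nat.card (GL (Fin 3) (ZMod 2)) = 168 := by
    rw [Matrix.card_GL_field]
    simp [Fin.prod_univ_succ, ZMod.card]
  have hGcard : Nat.card G = 2^(k+3) * 21 := by
    have h1 : Nat.card G = Nat.card (G ⧸ φ.ker) * Nat.card φ.ker :=
      Subgroup.card_eq_card_quotient_mul_card_subgroup φ.ker
    have h2 : Nat.card (G ⧸ φ.ker) = Nat.card (GL (Fin 3) (ZMod 2)) :=
      Nat.card_congr (QuotientGroup.quotientKerEquivOfSurjective φ hsurj).toEquiv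
    rw [h1, h2, hcard168, hk]
    ring
  -- E is a Sylow 7-subgroup
  haveI : Fact (Nat.Prime 7) := ⟨by norm_num⟩
  have hfact : (Nat.card G).factorization 7 = 1 := by
    rw [hGcard]
    rw [Nat.factorization_mul (by positivity) (by norm_num)]
    rw [Nat.Prime.factorization_pow Nat.prime_two]
    have : (21 : ℕ) = 3 * 7 := by norm_num
    rw [this, Nat.factorization_mul (by norm_num) (by norm_num)]
    simp [Nat.Prime.factorization Nat.prime_three, Nat.Prime.factorization (by norm_num : Nat.Prime 7),
      Finsupp.single_apply]
  have hEcard : Nat.card E = 7 ^ (Nat.card G).factorization 7 := by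
    rw [hfact, pow_one, hE]
  let P : Sylow 7 G := Sylow.ofCard E hEcard
  have hPcoe : (P : Subgroup G) = E := Sylow.coe_ofCard E hEcard
  have hn7 : Nat.card (Sylow 7 G) = (Subgroup.normalizer (E : Set G)).index := by
    rw [Sylow.card_eq_index_normalizer P]
    exact congrArg (fun H : Subgroup G => (Subgroup.normalizer (H : Set G)).index) hPcoe
  have hmod : Nat.card (Sylow 7 G) % 7 = 1 := by
    have := card_sylow_modEq_one 7 G
    simpa [Nat.ModEq] using this
  -- decompose card G
  have hidx : (Subgroup.normalizer (E : Set G)).index * Nat.card (Subgroup.normalizer (E : Set G)) = Nat.card G :=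
    Subgroup.index_mul_card (Subgroup.normalizer (E : Set G))
  have hNdecomp : Nat.card (Subgroup.normalizer (E : Set G)) =
      Nat.card ((Subgroup.normalizer (E : Set G)) ⧸ E.subgroupOf (Subgroup.normalizer (E : Set G))) * Nat.card (E.subgroupOf (Subgroup.normalizer (E : Set G))) :=
    Subgroup.card_eq_card_quotient_mul_card_subgroup (E.subgroupOf (Subgroup.normalizer (E : Set G)))
  have hE' : Nat.card (E.subgroupOf (Subgroup.normalizer (E : Set G))) = 7 := by
    rw [Nat.card_congr (Subgroup.subgroupOfEquivOfLe (Subgroup.le_normalizer (H := E))).toEquiv, hE]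
  set q := Nat.card ((Subgroup.normalizer (E : Set G)) ⧸ E.subgroupOf (Subgroup.normalizer (E : Set G))) with hq
  have hbig : Nat.card (Sylow 7 G) * (q * 7) = 2^(k+3) * 21 := by
    rw [hn7, ← hE', ← hNdecomp, hidx, hGcard]
  have hmain : Nat.card (Sylow 7 G) * q = 2^(k+3) * 3 := by
    have h7 : (Nat.card (Sylow 7 G) * q) * 7 = (2^(k+3) * 3) * 7 := by
      calc (Nat.card (Sylow 7 G) * q) * 7 = Nat.card (Sylow 7 G) * (q * 7) := by ring
        _ = 2^(k+3) * 21 := hbig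
        _ = (2^(k+3) * 3) * 7 := by ring
    exact Nat.eq_of_mul_eq_mul_right (by norm_num) h7
  obtain ⟨a, ha⟩ := aux_arith (k+3) (Nat.card (Sylow 7 G)) q hmain hmod
  exact ⟨a, ha⟩
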